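/- arXiv:0902.1505 — 3 statements merged into one kernel-verified Lean document; each statement's English description precedes it below -/
import Mathlib

section
/- For every integer N ≥ 1 and every vector (λ_1, …, λ_N) ∈ ℝ^N with λ_i ≥ 0 for all i and ∑_{i=1}^N λ_i = 1, one has ∏_{i=1}^N λ_i · ∏_{1≤i<j≤N} (λ_i + λ_j)^2 ≤ 2^{N²−N} · N^{−N²}, with equality if and only if λ_i = 1/N for all i. -/
open scoped BigOperators

/-- AM-GM with equality case, via strict Jensen for `log`. -/
lemma amgm_eq {ι : Type*} [Fintype ι] [Nonempty ι] (z : ι → ℝ) (a : ℝ) (ha : 0 < a)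
    (hz : ∀ i, 0 ≤ z i) (hs : ∑ i, z i = (Fintype.card ι : ℝ) * a) :
    ∏ i, z i ≤ a ^ (Fintype.card ι) ∧
      ((∏ i, z i = a ^ Fintype.card ι) ↔ ∀ i, z i = a) := by
  set n := Fintype.card ι with hn
  have hnpos : 0 < n := Fintype.card_pos
  have hapow : 0 < a ^ n := pow_pos ha n
  by_cases h0 : ∃ i, z i = 0
  · obtain ⟨i, hi⟩ := h0
    have hprod : ∏ i, z i = 0 := Finset.prod_eq_zero (Finset.mem_univ i) hi
    refine ⟨hprod ▸ hapow.le, ?_, ?_⟩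
    · intro h; rw [hprod] at h; exact absurd h.symm hapow.ne'
    · intro h; exact absurd (hi ▸ h i) ha.ne
  · push_neg at h0
    have hz' : ∀ i, 0 < z i := fun i => (hz i).lt_of_ne (Ne.symm (h0 i))
    have hw : ∑ _i : ι, (1 / n : ℝ) = 1 := by
      rw [Finset.sum_const, Finset.card_univ, ← hn, nsmul_eq_mul]
      field_simp
    have h₀ : ∀ i ∈ (Finset.univ : Finset ι), (0:ℝ) < 1 / n := fun _ _ => by positivity
    have hmem : ∀ i ∈ Finset.univ, z i ∈ Set.Ioi (0:ℝ) := fun i _ => hz' i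
    have hcenter : ∑ i, (1 / n : ℝ) • z i = a := by
      simp only [smul_eq_mul, ← Finset.mul_sum, hs]
      field_simp
    have hlog : ∑ i, (1 / n : ℝ) • Real.log (z i) = (1 / n : ℝ) * Real.log (∏ i, z i) := by
      rw [Real.log_prod (fun i _ => (hz' i).ne'), Finset.mul_sum]
      simp [smul_eq_mul]
    have hprodpos : 0 < ∏ i, z i := Finset.prod_pos (fun i _ => hz' i)
    have hn' : (0:ℝ) < n := by exact_mod_cast hnpos
    have hineq : ∑ i, (1 / n : ℝ) • Real.log (z i) ≤ Real.log (∑ i, (1 / n : ℝ) • z i) :=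
      (strictConcaveOn_log_Ioi.concaveOn).le_map_sum
        (fun i hi => (h₀ i hi).le) hw hmem
    have key_le : ∏ i, z i ≤ a ^ n := by
      rw [hcenter, hlog] at hineq
      have hL : Real.log (∏ i, z i) ≤ (n : ℝ) * Real.log a := by
        rw [div_mul_eq_mul_div, one_mul, div_le_iff₀ hn'] at hineq
        linarith
      rw [← Real.log_pow] at hL
      exact (Real.log_le_log_iff hprodpos hapow).1 hL
    refine ⟨key_le, ?_, fun h => ?_⟩
    · intro h
      have heqiff := strictConcaveOn_log_Ioi.map_sum_eq_iff h₀ hw hmem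
      rw [hcenter, hlog] at heqiff
      have hLeq : (1 / n : ℝ) * Real.log (∏ i, z i) = Real.log a := by
        rw [h, Real.log_pow]
        field_simp
      intro i
      exact (heqiff.1 hLeq.symm) i (Finset.mem_univ i)
    · rw [Finset.prod_congr rfl (fun i _ => h i), Finset.prod_const, Finset.card_univ]

/-- Splitting a product over all ordered pairs for a symmetric function. -/
lemma prod_pairs_split {N : ℕ} (f : Fin N → Fin N → ℝ) (hsym : ∀ i j, f i j = f j i) :
    ∏ p : Fin N × Fin N, f p.1 p.2 =
      (∏ i, f i i) * (∏ i, ∏ j ∈ Finset.univ.filter fun j => i < j, f i j) ^ 2 := by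
  rw [Fintype.prod_prod_type]
  have hdecomp : ∀ i : Fin N, (Finset.univ : Finset (Fin N)) =
      {i} ∪ ((Finset.univ.filter fun j => j < i) ∪ (Finset.univ.filter fun j => i < j)) := by
    intro i
    ext j
    simp only [Finset.mem_univ, Finset.mem_union, Finset.mem_singleton, Finset.mem_filter,
      true_and, true_iff, Fin.lt_def, Fin.ext_iff]
    omega
  have hstep : ∀ i : Fin N, ∏ j, f i j =
      f i i * ((∏ j ∈ Finset.univ.filter fun j => j < i, f i j) *
        (∏ j ∈ Finset.univ.filter fun j => i < j, f i j)) := by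
    intro i
    have d2 : Disjoint (Finset.univ.filter fun j => j < i)
        (Finset.univ.filter fun j => i < j) := by
      rw [Finset.disjoint_filter]
      intro x _ h h'
      exact absurd (h.trans h') (lt_irrefl x)
    have d1 : Disjoint ({i} : Finset (Fin N))
        ((Finset.univ.filter fun j => j < i) ∪ (Finset.univ.filter fun j => i < j)) := by
      simp only [Finset.disjoint_union_right, Finset.disjoint_singleton_left,
        Finset.mem_filter, Finset.mem_univ, true_and, not_lt]
      exact ⟨le_refl i, le_refl i⟩
    conv_lhs => rw [hdecomp i]
    rw [Finset.prod_union d1, Finset.prod_union d2, Finset.prod_singleton]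
  rw [Finset.prod_congr rfl (fun i _ => hstep i)]
  rw [Finset.prod_mul_distrib, Finset.prod_mul_distrib]
  have hswap : (∏ i, ∏ j ∈ Finset.univ.filter fun j => j < i, f i j) =
      ∏ i, ∏ j ∈ Finset.univ.filter fun j => i < j, f i j := by
    rw [Finset.prod_comm' (t' := Finset.univ)
      (s' := fun j => Finset.univ.filter fun i => j < i) (by intro i j; simp)]
    exact Finset.prod_congr rfl fun j _ => Finset.prod_congr rfl fun i _ => hsym i j
  rw [hswap]
  ring

/-- The maximum of `h(λ) = ∏ᵢ λᵢ · ∏_{i<j} (λᵢ+λⱼ)²` over the standard simplex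
equals `2^{N²-N} N^{-N²}`, attained exactly at the center `λᵢ = 1/N`. -/
theorem simplex_prod_max (N : ℕ) (hN : 1 ≤ N) (lam : Fin N → ℝ)
    (hpos : ∀ i, 0 ≤ lam i) (hsum : ∑ i, lam i = 1) :
    (∏ i, lam i) * (∏ i, ∏ j ∈ Finset.univ.filter fun j => i < j, (lam i + lam j) ^ 2)
      ≤ 2 ^ (N ^ 2 - N) * ((N : ℝ) ^ (N ^ 2))⁻¹ ∧
    ((∏ i, lam i) * (∏ i, ∏ j ∈ Finset.univ.filter fun j => i < j, (lam i + lam j) ^ 2)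
        = 2 ^ (N ^ 2 - N) * ((N : ℝ) ^ (N ^ 2))⁻¹ ↔ ∀ i, lam i = 1 / N) := by
  have hNR : (0:ℝ) < N := by exact_mod_cast hN
  have hN1 : Nonempty (Fin N) := ⟨⟨0, hN⟩⟩
  set z : Fin N × Fin N → ℝ := fun p => (lam p.1 + lam p.2) / 2 with hzdef
  have hzn : ∀ p, 0 ≤ z p := fun p => div_nonneg (add_nonneg (hpos _) (hpos _)) two_pos.le
  have hcard : (Fintype.card (Fin N × Fin N)) = N ^ 2 := by
    simp [Fintype.card_prod, sq]
  have hs : ∑ p, z p = (Fintype.card (Fin N × Fin N) : ℝ) * (1 / N) := by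
    rw [hcard, Fintype.sum_prod_type]
    have inner : ∀ i, ∑ j, z (i, j) = ((N : ℝ) * lam i + 1) / 2 := by
      intro i
      simp only [hzdef, ← Finset.sum_div, Finset.sum_add_distrib, hsum, Finset.sum_const,
        Finset.card_univ, Fintype.card_fin, nsmul_eq_mul]
    rw [Finset.sum_congr rfl (fun i _ => inner i), ← Finset.sum_div, Finset.sum_add_distrib,
      ← Finset.mul_sum, hsum, Finset.sum_const, Finset.card_univ, Fintype.card_fin, nsmul_eq_mul]
    push_cast
    field_simp
    ring
  obtain ⟨hle, hiff⟩ := amgm_eq z (1 / N) (by positivity) hzn hs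
  rw [hcard] at hle hiff
  have hinv : ((1 : ℝ) / N) ^ (N ^ 2) = ((N : ℝ) ^ (N ^ 2))⁻¹ := by
    rw [one_div, inv_pow]
  rw [hinv] at hle hiff
  -- bridging identity
  have hNle : N ≤ N ^ 2 := by nlinarith
  have h2 : (2:ℝ) ^ (N ^ 2 - N) * (2:ℝ) ^ N = 2 ^ (N ^ 2) := by
    rw [← pow_add, Nat.sub_add_cancel hNle]
  have hbridge : (∏ i, lam i) *
      (∏ i, ∏ j ∈ Finset.univ.filter fun j => i < j, (lam i + lam j) ^ 2)
      = 2 ^ (N ^ 2 - N) * ∏ p, z p := by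
    have hps := prod_pairs_split (fun i j => lam i + lam j) (fun i j => by ring)
    have hzprod : ∏ p, z p = (1 / 2 : ℝ) ^ (N ^ 2) * ∏ p : Fin N × Fin N, (lam p.1 + lam p.2) := by
      have hz2 : ∀ p : Fin N × Fin N, z p = (1/2 : ℝ) * (lam p.1 + lam p.2) := fun p => by
        simp only [hzdef]; ring
      rw [Finset.prod_congr rfl fun p _ => hz2 p, Finset.prod_mul_distrib, Finset.prod_const,
        Finset.card_univ, hcard]
    have hdiag : (∏ i : Fin N, (lam i + lam i)) = 2 ^ N * ∏ i, lam i := by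
      have : ∀ i : Fin N, lam i + lam i = 2 * lam i := fun i => by ring
      rw [Finset.prod_congr rfl (fun i _ => this i), Finset.prod_mul_distrib,
        Finset.prod_const, Finset.card_univ, Fintype.card_fin]
    have hsq : (∏ i, ∏ j ∈ Finset.univ.filter fun j => i < j, (lam i + lam j) ^ 2)
        = (∏ i, ∏ j ∈ Finset.univ.filter fun j => i < j, (lam i + lam j)) ^ 2 := by
      rw [← Finset.prod_pow]
      exact Finset.prod_congr rfl fun i _ => Finset.prod_pow _ _ _
    rw [hsq, hzprod, hps, hdiag]
    have h22 : (2:ℝ) ^ (N ^ 2 - N) * ((1/2:ℝ) ^ (N ^ 2) * 2 ^ N) = 1 := by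
      rw [mul_comm ((1/2:ℝ) ^ (N^2)) _, ← mul_assoc, h2, ← mul_pow]
      norm_num
    calc (∏ i, lam i) * (∏ i, ∏ j ∈ Finset.univ.filter fun j => i < j, (lam i + lam j)) ^ 2
        = ((2:ℝ) ^ (N ^ 2 - N) * ((1/2:ℝ) ^ (N ^ 2) * 2 ^ N)) * ((∏ i, lam i) *
          (∏ i, ∏ j ∈ Finset.univ.filter fun j => i < j, (lam i + lam j)) ^ 2) := by
          rw [h22, one_mul]
      _ = 2 ^ (N ^ 2 - N) * ((1 / 2:ℝ) ^ (N ^ 2) *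
          (2 ^ N * (∏ i, lam i) *
            (∏ i, ∏ j ∈ Finset.univ.filter fun j => i < j, (lam i + lam j)) ^ 2)) := by ring
  have h2pos : (0:ℝ) < 2 ^ (N ^ 2 - N) := by positivity
  constructor
  · rw [hbridge]
    exact mul_le_mul_of_nonneg_left hle h2pos.le
  · rw [hbridge]
    constructor
    · intro h
      have hP : ∏ p, z p = ((N : ℝ) ^ (N ^ 2))⁻¹ := mul_left_cancel₀ h2pos.ne' h
      intro i
      have := hiff.1 hP (i, i)
      simp only [hzdef] at this
      linarith
    · intro h
      have : ∀ p : Fin N × Fin N, z p = 1 / N := by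
        intro p
        simp only [hzdef, h p.1, h p.2]
        ring
      rw [hiff.2 this]
end

section
/- With σ_d = π^{d/2} / Γ(1 + d/2) denoting the volume of the d-dimensional Euclidean unit ball, one has lim_{N→∞} ( (2^{1−N²} · π^{N²/2} / Γ(N²/2)) / σ_{N²−1} )^{1/(N²−1)} = 1/2. Equivalently, the Bures volume radius of the set of N×N density matrices, whose Bures volume equals 2^{1−N²} π^{N²/2} / Γ(N²/2), tends to 1/2 as N → ∞. -/
open Filter

private lemma gamma_log_upper (x : ℝ) (hx : 0 < x) :
    Real.log (Real.Gamma (x + 1/2)) - Real.log (Real.Gamma x) ≤ 1/2 * Real.log x := by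
  have h := Real.convexOn_log_Gamma.2 (Set.mem_Ioi.2 hx)
    (Set.mem_Ioi.2 (by linarith : (0:ℝ) < x + 1)) (by norm_num : (0:ℝ) ≤ 1/2)
    (by norm_num : (0:ℝ) ≤ 1/2) (by norm_num)
  simp only [smul_eq_mul, Function.comp_apply] at h
  have hx1 : Real.Gamma (x+1) = x * Real.Gamma x := Real.Gamma_add_one (ne_of_gt hx)
  rw [hx1, Real.log_mul (ne_of_gt hx) (ne_of_gt (Real.Gamma_pos_of_pos hx))] at h
  have : (1/2 : ℝ) * x + 1/2 * (x+1) = x + 1/2 := by ring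
  rw [this] at h
  linarith

private lemma gamma_log_lower (x : ℝ) (hx : 1/2 < x) :
    1/2 * Real.log (x - 1/2) ≤ Real.log (Real.Gamma (x + 1/2)) - Real.log (Real.Gamma x) := by
  have hx' : (0:ℝ) < x - 1/2 := by linarith
  have h := Real.convexOn_log_Gamma.2 (Set.mem_Ioi.2 hx')
    (Set.mem_Ioi.2 (by linarith : (0:ℝ) < x + 1/2)) (by norm_num : (0:ℝ) ≤ 1/2)
    (by norm_num : (0:ℝ) ≤ 1/2) (by norm_num)
  simp only [smul_eq_mul, Function.comp_apply] at h
  have hfe : Real.Gamma (x + 1/2) = (x - 1/2) * Real.Gamma (x - 1/2) := by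
    have := Real.Gamma_add_one (ne_of_gt hx')
    rw [show x - 1/2 + 1 = x + 1/2 by ring] at this
    exact this
  have hΓ' : 0 < Real.Gamma (x - 1/2) := Real.Gamma_pos_of_pos hx'
  rw [hfe, Real.log_mul (ne_of_gt hx') (ne_of_gt hΓ')] at h ⊢
  have : (1/2 : ℝ) * (x - 1/2) + 1/2 * (x + 1/2) = x := by ring
  rw [this] at h
  linarith

private lemma aux_tendsto (a b : ℝ) :
    Tendsto (fun t : ℝ => (a + b * Real.log t) / t) atTop (nhds 0) := by
  have h1 : (fun t : ℝ => a + b * Real.log t) =o[atTop] (fun t : ℝ => t) := by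
    have hc : (fun _ : ℝ => a) =o[atTop] (fun t : ℝ => t) :=
      Asymptotics.isLittleO_const_left.2 (Or.inr tendsto_abs_atTop_atTop)
    have hl : (fun t : ℝ => b * Real.log t) =o[atTop] (fun t : ℝ => t) :=
      Real.isLittleO_log_id_atTop.const_mul_left b
    exact hc.add hl
  exact h1.tendsto_div_nhds_zero

private lemma s_tendsto : Tendsto (fun N : ℕ => (N : ℝ) ^ 2 - 1) atTop atTop := by
  apply tendsto_atTop_add_const_right
  exact (tendsto_pow_atTop two_ne_zero).comp tendsto_natCast_atTop_atTop

/-- The Bures volume radius of `D_N` tends to `1/2`: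
`((2^{1-N²} π^{N²/2} / Γ(N²/2)) / σ_{N²-1})^{1/(N²-1)} → 1/2`, where
`σ_d = π^{d/2}/Γ(1 + d/2)` is the volume of the `d`-dimensional Euclidean unit ball. -/
theorem bures_vrad_tendsto_half :
    Tendsto (fun N : ℕ =>
        (((2 : ℝ) ^ ((1 : ℝ) - (N : ℝ) ^ 2) * Real.pi ^ ((N : ℝ) ^ 2 / 2) /
              Real.Gamma ((N : ℝ) ^ 2 / 2)) /
            (Real.pi ^ (((N : ℝ) ^ 2 - 1) / 2) / Real.Gamma (1 + ((N : ℝ) ^ 2 - 1) / 2))) ^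
          (1 / ((N : ℝ) ^ 2 - 1)))
      atTop (nhds (1 / 2)) := by
  set g : ℕ → ℝ := fun N =>
    (1/2 * Real.log Real.pi +
      (Real.log (Real.Gamma ((N : ℝ) ^ 2 / 2 + 1/2)) - Real.log (Real.Gamma ((N : ℝ) ^ 2 / 2))))
      / ((N : ℝ) ^ 2 - 1) with hg
  -- g tends to 0 by squeezing
  have hg0 : Tendsto g atTop (nhds 0) := by
    have hL : Tendsto (fun N : ℕ =>
        ((1/2 * Real.log Real.pi - 1/2 * Real.log 2) + 1/2 * Real.log ((N:ℝ)^2 - 1))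
          / ((N:ℝ)^2 - 1)) atTop (nhds 0) :=
      (aux_tendsto (1/2 * Real.log Real.pi - 1/2 * Real.log 2) (1/2)).comp s_tendsto
    have hU : Tendsto (fun N : ℕ =>
        (1/2 * Real.log Real.pi + 1/2 * Real.log ((N:ℝ)^2 - 1)) / ((N:ℝ)^2 - 1))
        atTop (nhds 0) :=
      (aux_tendsto (1/2 * Real.log Real.pi) (1/2)).comp s_tendsto
    apply tendsto_of_tendsto_of_tendsto_of_le_of_le' hL hU
    · filter_upwards [eventually_ge_atTop 2] with N hN
      have hN2 : (2:ℝ) ≤ (N:ℝ) := by exact_mod_cast hN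
      have hn4 : (4:ℝ) ≤ (N:ℝ)^2 := by nlinarith
      have hs : (0:ℝ) < (N:ℝ)^2 - 1 := by linarith
      have hlow := gamma_log_lower ((N:ℝ)^2/2) (by linarith)
      have key : 1/2 * Real.log (((N:ℝ)^2 - 1)/2)
          ≤ Real.log (Real.Gamma ((N:ℝ)^2/2 + 1/2)) - Real.log (Real.Gamma ((N:ℝ)^2/2)) := by
        rw [show ((N:ℝ)^2 - 1)/2 = (N:ℝ)^2/2 - 1/2 by ring]; exact hlow
      rw [Real.log_div (by linarith) (by norm_num)] at key
      have : ((1/2 * Real.log Real.pi - 1/2 * Real.log 2) + 1/2 * Real.log ((N:ℝ)^2 - 1))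
          ≤ 1/2 * Real.log Real.pi +
            (Real.log (Real.Gamma ((N:ℝ)^2/2 + 1/2)) - Real.log (Real.Gamma ((N:ℝ)^2/2))) := by
        linarith
      exact div_le_div_of_nonneg_right this hs.le |>.trans_eq rfl
    · filter_upwards [eventually_ge_atTop 2] with N hN
      have hN2 : (2:ℝ) ≤ (N:ℝ) := by exact_mod_cast hN
      have hn4 : (4:ℝ) ≤ (N:ℝ)^2 := by nlinarith
      have hs : (0:ℝ) < (N:ℝ)^2 - 1 := by linarith
      have hup := gamma_log_upper ((N:ℝ)^2/2) (by linarith)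
      have hloglog : Real.log ((N:ℝ)^2/2) ≤ Real.log ((N:ℝ)^2 - 1) :=
        Real.log_le_log (by linarith) (by linarith)
      have : 1/2 * Real.log Real.pi +
            (Real.log (Real.Gamma ((N:ℝ)^2/2 + 1/2)) - Real.log (Real.Gamma ((N:ℝ)^2/2)))
          ≤ 1/2 * Real.log Real.pi + 1/2 * Real.log ((N:ℝ)^2 - 1) := by linarith
      exact div_le_div_of_nonneg_right this hs.le
  -- the limit of exp (-log 2 + g N)
  have hmain : Tendsto (fun N : ℕ => Real.exp (-Real.log 2 + g N)) atTop (nhds (1/2)) := by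
    have h1 : Tendsto (fun N : ℕ => -Real.log 2 + g N) atTop (nhds (-Real.log 2 + 0)) :=
      tendsto_const_nhds.add hg0
    have h2 := (Real.continuous_exp.tendsto _).comp h1
    simp only [add_zero, Real.exp_neg, Real.exp_log two_pos] at h2
    convert h2 using 2
    norm_num
    norm_num
  -- eventual equality
  refine Tendsto.congr' ?_ hmain
  filter_upwards [eventually_ge_atTop 2] with N hN
  have hN2 : (2:ℝ) ≤ (N:ℝ) := by exact_mod_cast hN
  have hn4 : (4:ℝ) ≤ (N:ℝ)^2 := by nlinarith
  have hs : (0:ℝ) < (N:ℝ)^2 - 1 := by linarith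
  have hΓ1 : 0 < Real.Gamma ((N:ℝ)^2/2) := Real.Gamma_pos_of_pos (by linarith)
  have harg : 1 + ((N:ℝ)^2 - 1)/2 = (N:ℝ)^2/2 + 1/2 := by ring
  have hΓ2 : 0 < Real.Gamma (1 + ((N:ℝ)^2 - 1)/2) := by
    rw [harg]; exact Real.Gamma_pos_of_pos (by linarith)
  have h2p : (0:ℝ) < (2:ℝ) ^ ((1:ℝ) - (N:ℝ)^2) := Real.rpow_pos_of_pos two_pos _
  have hpp : (0:ℝ) < Real.pi ^ ((N:ℝ)^2/2) := Real.rpow_pos_of_pos Real.pi_pos _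
  have hpp2 : (0:ℝ) < Real.pi ^ (((N:ℝ)^2 - 1)/2) := Real.rpow_pos_of_pos Real.pi_pos _
  have hE : (0:ℝ) < (2:ℝ) ^ ((1:ℝ) - (N:ℝ)^2) * Real.pi ^ ((N:ℝ)^2/2)
      / Real.Gamma ((N:ℝ)^2/2) / (Real.pi ^ (((N:ℝ)^2 - 1)/2) / Real.Gamma (1 + ((N:ℝ)^2 - 1)/2)) :=
    div_pos (div_pos (mul_pos h2p hpp) hΓ1) (div_pos hpp2 hΓ2)
  rw [Real.rpow_def_of_pos hE]
  congr 1
  have hlogE : Real.log ((2:ℝ) ^ ((1:ℝ) - (N:ℝ)^2) * Real.pi ^ ((N:ℝ)^2/2)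
      / Real.Gamma ((N:ℝ)^2/2) / (Real.pi ^ (((N:ℝ)^2 - 1)/2) / Real.Gamma (1 + ((N:ℝ)^2 - 1)/2)))
      = ((1:ℝ) - (N:ℝ)^2) * Real.log 2 + ((N:ℝ)^2/2) * Real.log Real.pi
        - Real.log (Real.Gamma ((N:ℝ)^2/2))
        - ((((N:ℝ)^2 - 1)/2) * Real.log Real.pi - Real.log (Real.Gamma (1 + ((N:ℝ)^2 - 1)/2))) := by
    rw [Real.log_div (by positivity) (by positivity), Real.log_div (by positivity) (ne_of_gt hΓ1),
      Real.log_mul (ne_of_gt h2p) (ne_of_gt hpp), Real.log_div (ne_of_gt hpp2) (ne_of_gt hΓ2),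
      Real.log_rpow two_pos, Real.log_rpow Real.pi_pos, Real.log_rpow Real.pi_pos]
  rw [hlogE, hg, harg]
  field_simp
  ring
end

section
/- One has lim_{N→∞} (N²−1)^{3/4} · ( (2π)^{N(N−1)/2} · √N · E(N) / Γ(N²) )^{1/(N²−1)} = (4π²e)^{1/4}, where E(N) = ∏_{j=1}^N Γ(j). Equivalently, the total Hilbert–Schmidt volume V_HS(D_N) = (2π)^{N(N−1)/2} √N E(N)/Γ(N²) of the set of N×N density matrices satisfies (V_HS(D_N))^{1/d} ∼ (4π²e)^{1/4} d^{−3/4} with d = N²−1. -/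
open Filter Real Finset Nat


noncomputable def rr (n : ℕ) : ℝ := Real.log (Stirling.stirlingSeq n) - Real.log (Real.sqrt Real.pi)

lemma rr_tendsto : Tendsto rr atTop (nhds 0) := by
  have h := Stirling.tendsto_stirlingSeq_sqrt_pi
  have hpos : (0:ℝ) < Real.sqrt Real.pi := Real.sqrt_pos.2 Real.pi_pos
  have : Tendsto (fun n => Real.log (Stirling.stirlingSeq n)) atTop
      (nhds (Real.log (Real.sqrt Real.pi))) :=
    ((Real.continuousAt_log hpos.ne').tendsto).comp h
  have h2 : Tendsto rr atTop (nhds (Real.log (Real.sqrt Real.pi) - Real.log (Real.sqrt Real.pi))) :=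
    this.sub (tendsto_const_nhds (x := Real.log (Real.sqrt Real.pi)))
  rw [sub_self] at h2
  exact h2

lemma stirlingSeq_pos {n : ℕ} (hn : 1 ≤ n) : 0 < Stirling.stirlingSeq n := by
  apply _root_.div_pos (by positivity)
  apply mul_pos (Real.sqrt_pos.2 (by positivity))
  positivity

lemma log_factorial {n : ℕ} (hn : 1 ≤ n) :
    Real.log (n !) = n * Real.log n - n + (1/2) * Real.log (2 * Real.pi * n) + rr n := by
  have hn0 : (0:ℝ) < n := by exact_mod_cast hn
  have h1 : Real.log (Stirling.stirlingSeq n)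
      = Real.log (n !) - ((1/2) * Real.log (2 * n) + n * (Real.log n - 1)) := by
    rw [Stirling.stirlingSeq, Real.log_div (by positivity) (by positivity),
      Real.log_mul (by positivity) (by positivity), Real.log_sqrt (by positivity),
      Real.log_pow, Real.log_div (by positivity) (Real.exp_pos 1).ne', Real.log_exp]
    ring
  have h2 : Real.log (2 * Real.pi * n) = Real.log Real.pi + Real.log (2*n) := by
    rw [show (2:ℝ) * Real.pi * n = Real.pi * (2*n) by ring,
      Real.log_mul Real.pi_pos.ne' (by positivity)]
  have h3 : Real.log (Real.sqrt Real.pi) = Real.log Real.pi / 2 :=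
    Real.log_sqrt Real.pi_pos.le
  rw [rr, h1, h2, h3]; ring

noncomputable def FF (x : ℝ) : ℝ := x^2/2 * Real.log x - x^2/4

lemma hasDerivAt_FF {x : ℝ} (hx : 0 < x) : HasDerivAt FF (x * Real.log x) x := by
  have h1 : HasDerivAt (fun y : ℝ => y^2/2 * Real.log y)
      (x * Real.log x + x^2/2 * (1/x)) x := by
    have := ((hasDerivAt_pow 2 x).div_const 2).mul (Real.hasDerivAt_log hx.ne')
    refine this.congr_deriv ?_
    push_cast
    ring
  have h2 : HasDerivAt (fun y : ℝ => y^2/4) (x/2) x := by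
    have := (hasDerivAt_pow 2 x).div_const 4
    refine this.congr_deriv ?_; push_cast; ring
  have := h1.sub h2
  refine this.congr_deriv ?_
  field_simp
  ring

lemma xlogx_mono {a b : ℝ} (ha : 1 ≤ a) (hab : a ≤ b) :
    a * Real.log a ≤ b * Real.log b := by
  have h1 : (0:ℝ) ≤ Real.log a := Real.log_nonneg ha
  have h2 : Real.log a ≤ Real.log b := Real.log_le_log (by linarith) hab
  nlinarith

lemma FF_diff_bounds {k : ℕ} (hk : 1 ≤ k) :
    (k:ℝ) * Real.log k ≤ FF (k+1) - FF k ∧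
      FF (k+1) - FF k ≤ ((k:ℝ)+1) * Real.log ((k:ℝ)+1) := by
  have hk1 : (1:ℝ) ≤ (k:ℝ) := by exact_mod_cast hk
  have hlt : (k:ℝ) < (k:ℝ)+1 := by linarith
  obtain ⟨c, hc, hslope⟩ := exists_hasDerivAt_eq_slope FF (fun x => x * Real.log x) hlt
    (fun x hx => (hasDerivAt_FF (by rcases hx with ⟨h1,h2⟩; linarith)).continuousAt.continuousWithinAt)
    (fun x hx => hasDerivAt_FF (by rcases hx with ⟨h1,h2⟩; linarith))
  rcases hc with ⟨hc1, hc2⟩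
  have hd : FF ((k:ℝ)+1) - FF k = c * Real.log c := by
    rw [hslope]; ring
  constructor
  · rw [hd]; exact xlogx_mono hk1 hc1.le
  · rw [hd]; exact xlogx_mono (by linarith) hc2.le

noncomputable def SK (N : ℕ) : ℝ := ∑ k ∈ Finset.range N, ((k:ℝ)+1) * Real.log ((k:ℝ)+1)

lemma SK_bounds {N : ℕ} (hN : 1 ≤ N) :
    FF N + 1/4 ≤ SK N ∧ SK N ≤ FF N + 1/4 + N * Real.log N := by
  -- telescope: ∑_{j<N-1} (FF (j+2) - FF (j+1)) = FF N - FF 1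
  have htel : ∀ m : ℕ, ∑ j ∈ Finset.range m, (FF ((j:ℝ)+2) - FF ((j:ℝ)+1)) = FF (m+1) - FF 1 := by
    intro m
    induction m with
    | zero => simp
    | succ n ih => rw [Finset.sum_range_succ, ih]; push_cast; ring_nf
  have hF1 : FF 1 = -(1/4) := by simp [FF]
  obtain ⟨m, rfl⟩ : ∃ m, N = m + 1 := ⟨N - 1, (Nat.succ_pred_eq_of_pos hN).symm⟩
  have hSKsucc : SK (m+1) = SK m + ((m:ℝ)+1) * Real.log ((m:ℝ)+1) := by
    rw [SK, SK, Finset.sum_range_succ]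
  constructor
  · -- lower: SK (m+1) ≥ ∑_{j<m} (FF(j+2)-FF(j+1)) + (first term 1*log1=0 dropped) ... 
    have h1 : ∑ j ∈ Finset.range m, (FF ((j:ℝ)+2) - FF ((j:ℝ)+1))
        ≤ ∑ j ∈ Finset.range m, ((j:ℝ)+2) * Real.log ((j:ℝ)+2) := by
      apply Finset.sum_le_sum
      intro j _
      have := (FF_diff_bounds (k := j+1) (Nat.le_add_left 1 j)).2
      push_cast at this ⊢
      rw [add_assoc, one_add_one_eq_two] at this; exact this
    have h2 : SK (m+1) = (∑ j ∈ Finset.range m, ((j:ℝ)+2) * Real.log ((j:ℝ)+2)) + ((0:ℝ)+1) * Real.log ((0:ℝ)+1) := by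
      rw [SK, Finset.sum_range_succ']
      congr 1
      · exact Finset.sum_congr rfl (fun j _ => by push_cast; ring_nf)
      · norm_num
    rw [htel m, hF1] at h1
    rw [h2]
    simp only [zero_add, Real.log_one]
    push_cast
    linarith
  · have h1 : ∑ j ∈ Finset.range m, ((j:ℝ)+1) * Real.log ((j:ℝ)+1)
        ≤ ∑ j ∈ Finset.range m, (FF ((j:ℝ)+2) - FF ((j:ℝ)+1)) := by
      apply Finset.sum_le_sum
      intro j _
      have := (FF_diff_bounds (k := j+1) (Nat.le_add_left 1 j)).1
      push_cast at this ⊢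
      rw [add_assoc, one_add_one_eq_two] at this; exact this
    rw [htel m, hF1] at h1
    have : SK m ≤ FF (m+1) + 1/4 := by rw [SK]; push_cast at h1 ⊢; linarith
    rw [hSKsucc]
    push_cast
    linarith

lemma sum_log_factorial (N : ℕ) :
    ∑ j ∈ Finset.range N, Real.log (j !) = N * Real.log (N !) - SK N := by
  induction N with
  | zero => simp [SK]
  | succ n ih =>
    rw [Finset.sum_range_succ, ih]
    have hfac : Real.log ((n+1)!) = Real.log (n !) + Real.log ((n:ℝ)+1) := by
      rw [Nat.factorial_succ]
      push_cast
      rw [Real.log_mul (by positivity) (by positivity)]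
      ring
    have hSK : SK (n+1) = SK n + ((n:ℝ)+1) * Real.log ((n:ℝ)+1) := by
      rw [SK, SK, Finset.sum_range_succ]
    rw [hfac, hSK]
    push_cast
    ring


lemma lim_inv : Tendsto (fun N : ℕ => 1/(N:ℝ)) atTop (nhds 0) :=
  tendsto_one_div_atTop_nhds_zero_nat

lemma lim_log_div : Tendsto (fun N : ℕ => Real.log N / N) atTop (nhds 0) :=
  (Real.isLittleO_log_id_atTop.tendsto_div_nhds_zero).comp tendsto_natCast_atTop_atTop

lemma lim_invsq : Tendsto (fun N : ℕ => 1/(N:ℝ)^2) atTop (nhds 0) := by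
  have := lim_inv.mul lim_inv
  simp only [mul_zero] at this
  apply this.congr
  intro N
  ring

lemma lim_logsq : Tendsto (fun N : ℕ => Real.log N / (N:ℝ)^2) atTop (nhds 0) := by
  have := lim_log_div.mul lim_inv
  simp only [mul_zero] at this
  apply this.congr
  intro N
  ring

lemma lim_one_sub : Tendsto (fun N : ℕ => 1 - 1/(N:ℝ)^2) atTop (nhds 1) := by
  simpa using tendsto_const_nhds.sub lim_invsq

lemma lim_log_one_sub : Tendsto (fun N : ℕ => Real.log (1 - 1/(N:ℝ)^2)) atTop (nhds 0) := by
  have h : Tendsto (fun N : ℕ => Real.log (1 - 1/(N:ℝ)^2)) atTop (nhds (Real.log 1)) :=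
    ((Real.continuousAt_log one_ne_zero).tendsto).comp lim_one_sub
  simpa using h

lemma nat_sq_sub_tendsto : Tendsto (fun N : ℕ => N^2 - 1) atTop atTop := by
  apply tendsto_atTop_mono (f := fun N : ℕ => N - 1)
  · intro N
    exact Nat.sub_le_sub_right (Nat.le_self_pow two_ne_zero N) 1
  · exact tendsto_sub_atTop_nat 1

lemma lim_rr_sq : Tendsto (fun N : ℕ => rr (N^2 - 1)) atTop (nhds 0) :=
  rr_tendsto.comp nat_sq_sub_tendsto

lemma log_sq_sub_one {N : ℕ} (hN : 2 ≤ N) :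
    Real.log ((N:ℝ)^2 - 1) - 2 * Real.log N = Real.log (1 - 1/(N:ℝ)^2) := by
  have hN2 : (2:ℝ) ≤ (N:ℝ) := by exact_mod_cast hN
  have h1 : (0:ℝ) < (N:ℝ)^2 - 1 := by nlinarith
  have h2 : (1:ℝ) - 1/(N:ℝ)^2 = ((N:ℝ)^2 - 1) / (N:ℝ)^2 := by
    field_simp
  rw [h2, Real.log_div h1.ne' (by positivity), Real.log_pow]
  push_cast
  ring

lemma lim_p5 : Tendsto (fun N : ℕ => Real.log (2*Real.pi*(N:ℝ))/(2*(N:ℝ))) atTop (nhds 0) := by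
  have h : Tendsto (fun N : ℕ => Real.log (2*Real.pi) * (1/(N:ℝ)) * (1/2) + Real.log N / N * (1/2))
      atTop (nhds 0) := by
    have := ((tendsto_const_nhds (x := Real.log (2*Real.pi))).mul lim_inv).mul
      (tendsto_const_nhds (x := (1:ℝ)/2))
    have h2 := lim_log_div.mul (tendsto_const_nhds (x := (1:ℝ)/2))
    simpa using this.add h2
  apply h.congr'
  filter_upwards [eventually_ge_atTop 1] with N hN
  have hN0 : (0:ℝ) < (N:ℝ) := by exact_mod_cast hN
  rw [Real.log_mul (by positivity) hN0.ne']
  ring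

lemma lim_p8 : Tendsto (fun N : ℕ =>
    (1 - 1/(N:ℝ)^2) * (Real.log ((N:ℝ)^2 - 1) - 2*Real.log N)) atTop (nhds 0) := by
  have h := lim_one_sub.mul lim_log_one_sub
  simp only [mul_zero] at h
  apply h.congr'
  filter_upwards [eventually_ge_atTop 2] with N hN
  rw [log_sq_sub_one hN]

lemma lim_p9 : Tendsto (fun N : ℕ =>
    Real.log (2*Real.pi*((N:ℝ)^2-1))/(2*(N:ℝ)^2)) atTop (nhds 0) := by
  have h : Tendsto (fun N : ℕ =>
      Real.log (2*Real.pi) * (1/(N:ℝ)^2) * (1/2)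
        + Real.log (1 - 1/(N:ℝ)^2) * (1/(N:ℝ)^2) * (1/2)
        + Real.log N / (N:ℝ)^2) atTop (nhds 0) := by
    have h1 := (tendsto_const_nhds (x := Real.log (2*Real.pi))).mul lim_invsq
    have h2 := lim_log_one_sub.mul lim_invsq
    simpa using ((h1.mul (tendsto_const_nhds (x := (1:ℝ)/2))).add
      (h2.mul (tendsto_const_nhds (x := (1:ℝ)/2)))).add lim_logsq
  apply h.congr'
  filter_upwards [eventually_ge_atTop 2] with N hN
  have hN2 : (2:ℝ) ≤ (N:ℝ) := by exact_mod_cast hN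
  have h1 : (0:ℝ) < (N:ℝ)^2 - 1 := by nlinarith
  rw [Real.log_mul (by positivity) h1.ne', ← log_sq_sub_one hN]
  ring

noncomputable def θθ (N : ℕ) : ℝ := SK N - FF N - 1/4


noncomputable def tt (N : ℕ) : ℝ :=
  (N:ℝ) * ((N:ℝ)-1)/2 * Real.log (2*Real.pi) + (1/2) * Real.log N
    + (∑ j ∈ Finset.range N, Real.log (j !)) - Real.log ((N^2-1)!)
    + (3/2) * (N:ℝ)^2 * Real.log N

lemma lim_theta : Tendsto (fun N : ℕ => θθ N / (N:ℝ)^2) atTop (nhds 0) := by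
  apply tendsto_of_tendsto_of_tendsto_of_le_of_le' tendsto_const_nhds lim_log_div
  · filter_upwards [eventually_ge_atTop 1] with N hN
    have := (SK_bounds hN).1
    have hN2 : (0:ℝ) < (N:ℝ)^2 := by positivity
    rw [θθ]
    apply div_nonneg (by linarith) hN2.le
  · filter_upwards [eventually_ge_atTop 1] with N hN
    have h2 := (SK_bounds hN).2
    have hN0 : (0:ℝ) < (N:ℝ) := by exact_mod_cast hN
    have hN2 : (0:ℝ) < (N:ℝ)^2 := by positivity
    have hlog : (0:ℝ) ≤ Real.log N := Real.log_nonneg (by exact_mod_cast hN)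
    rw [θθ, div_le_div_iff₀ hN2 hN0]
    nlinarith

lemma tt_identity {N : ℕ} (hN : 2 ≤ N) :
    tt N / (N:ℝ)^2 =
      (1/2 - 1/(2*(N:ℝ))) * Real.log (2*Real.pi) + 1/4
      + (5/2) * (Real.log N / (N:ℝ)^2) - (5/4) * (1/(N:ℝ)^2)
      + Real.log (2*Real.pi*(N:ℝ))/(2*(N:ℝ))
      + rr N / N - θθ N / (N:ℝ)^2
      - (1 - 1/(N:ℝ)^2) * (Real.log ((N:ℝ)^2 - 1) - 2*Real.log N)
      - Real.log (2*Real.pi*((N:ℝ)^2-1))/(2*(N:ℝ)^2)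
      - rr (N^2-1) / (N:ℝ)^2 := by
  have hN1 : 1 ≤ N := le_trans one_le_two hN
  have hM1 : 1 ≤ N^2 - 1 := by
    have : 4 ≤ N^2 := by nlinarith
    omega
  have hMcast : ((N^2 - 1 : ℕ) : ℝ) = (N:ℝ)^2 - 1 := by
    have h1 : 1 ≤ N^2 := Nat.one_le_pow _ _ (by omega)
    push_cast [h1]
    ring
  have hN0 : ((N:ℝ)) ≠ 0 := by positivity
  have hlogN := log_factorial hN1
  have hlogM := log_factorial hM1
  rw [hMcast] at hlogM
  have hθ : SK N = FF N + 1/4 + θθ N := by rw [θθ]; ring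
  rw [tt, sum_log_factorial, hlogN, hlogM, hθ, FF]
  field_simp
  ring

lemma lim_tt : Tendsto (fun N : ℕ => tt N / (N:ℝ)^2) atTop
    (nhds ((1/2) * Real.log (2*Real.pi) + 1/4)) := by
  have h : Tendsto (fun N : ℕ =>
      (1/2 - 1/(2*(N:ℝ))) * Real.log (2*Real.pi) + 1/4
      + (5/2) * (Real.log N / (N:ℝ)^2) - (5/4) * (1/(N:ℝ)^2)
      + Real.log (2*Real.pi*(N:ℝ))/(2*(N:ℝ))
      + rr N / N - θθ N / (N:ℝ)^2
      - (1 - 1/(N:ℝ)^2) * (Real.log ((N:ℝ)^2 - 1) - 2*Real.log N)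
      - Real.log (2*Real.pi*((N:ℝ)^2-1))/(2*(N:ℝ)^2)
      - rr (N^2-1) / (N:ℝ)^2) atTop (nhds ((1/2) * Real.log (2*Real.pi) + 1/4)) := by
    have h1 : Tendsto (fun N : ℕ => 1/(2*(N:ℝ))) atTop (nhds 0) := by
      have := lim_inv.mul (tendsto_const_nhds (x := (1:ℝ)/2))
      simp only [zero_mul] at this
      apply this.congr
      intro N; ring
    have h6 : Tendsto (fun N : ℕ => rr N / (N:ℝ)) atTop (nhds 0) := by
      have := rr_tendsto.mul lim_inv
      simp only [mul_zero] at this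
      apply this.congr
      intro N; ring
    have h10 : Tendsto (fun N : ℕ => rr (N^2-1) / (N:ℝ)^2) atTop (nhds 0) := by
      have := lim_rr_sq.mul lim_invsq
      simp only [mul_zero] at this
      apply this.congr
      intro N; ring
    have := ((((((((((tendsto_const_nhds (x := (1:ℝ)/2)).sub h1).mul
      (tendsto_const_nhds (x := Real.log (2*Real.pi)))).add
      (tendsto_const_nhds (x := (1:ℝ)/4))).add
      ((tendsto_const_nhds (x := (5:ℝ)/2)).mul lim_logsq)).sub
      ((tendsto_const_nhds (x := (5:ℝ)/4)).mul lim_invsq)).add lim_p5).add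
      h6).sub lim_theta).sub lim_p8).sub lim_p9 |>.sub h10
    convert this using 2
    ring
  apply h.congr'
  filter_upwards [eventually_ge_atTop 2] with N hN
  exact (tt_identity hN).symm



noncomputable def LL (N : ℕ) : ℝ :=
  (3/4) * Real.log ((N:ℝ)^2-1)
    + (tt N - (3/2) * (N:ℝ)^2 * Real.log N)/((N:ℝ)^2-1)

lemma lim_ratio : Tendsto (fun N : ℕ => (N:ℝ)^2/((N:ℝ)^2-1)) atTop (nhds 1) := by
  have h := lim_one_sub.inv₀ one_ne_zero
  rw [inv_one] at h
  apply h.congr'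
  filter_upwards [eventually_ge_atTop 2] with N hN
  have hN2 : (2:ℝ) ≤ (N:ℝ) := by exact_mod_cast hN
  have h1 : (0:ℝ) < (N:ℝ)^2 - 1 := by nlinarith
  have h2 : (1 - 1/(N:ℝ)^2) = ((N:ℝ)^2-1)/(N:ℝ)^2 := by field_simp
  rw [h2, inv_div]

lemma lim_LL : Tendsto LL atTop (nhds ((1/2) * Real.log (2*Real.pi) + 1/4)) := by
  have h : Tendsto (fun N : ℕ =>
      (3/4) * (Real.log ((N:ℝ)^2-1) - 2*Real.log N)
      + (tt N/(N:ℝ)^2) * ((N:ℝ)^2/((N:ℝ)^2-1))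
      - (3/2) * (Real.log N/(N:ℝ)^2) * ((N:ℝ)^2/((N:ℝ)^2-1)))
      atTop (nhds ((1/2) * Real.log (2*Real.pi) + 1/4)) := by
    have h1 : Tendsto (fun N : ℕ =>
        (3/4) * (Real.log ((N:ℝ)^2-1) - 2*Real.log N)) atTop (nhds 0) := by
      have := (tendsto_const_nhds (x := (3:ℝ)/4)).mul lim_log_one_sub
      simp only [mul_zero] at this
      apply this.congr'
      filter_upwards [eventually_ge_atTop 2] with N hN
      rw [log_sq_sub_one hN]
    have h2 := lim_tt.mul lim_ratio
    have h3 := ((tendsto_const_nhds (x := (3:ℝ)/2)).mul lim_logsq).mul lim_ratio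
    simp only [mul_zero, zero_mul, mul_one] at h2 h3
    simpa using (h1.add h2).sub h3
  apply h.congr'
  filter_upwards [eventually_ge_atTop 2] with N hN
  have hN2 : (2:ℝ) ≤ (N:ℝ) := by exact_mod_cast hN
  have h1 : (0:ℝ) < (N:ℝ)^2 - 1 := by nlinarith
  have hN0 : ((N:ℝ)) ≠ 0 := by positivity
  rw [LL]
  field_simp
  ring

/-- `(V_HS(D_N))^{1/d} ∼ (4π²e)^{1/4} d^{-3/4}` with `d = N² - 1`, i.e.
`(N²-1)^{3/4} · ((2π)^{N(N-1)/2} √N E(N)/Γ(N²))^{1/(N²-1)} → (4π²e)^{1/4}`,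
where `E(N) = ∏_{j=1}^N Γ(j)`. -/
theorem hs_volume_asymptotics :
    Tendsto (fun N : ℕ =>
        ((N : ℝ) ^ 2 - 1) ^ ((3 : ℝ) / 4) *
          ((2 * Real.pi) ^ ((N : ℝ) * ((N : ℝ) - 1) / 2) * Real.sqrt N *
              (∏ j ∈ Finset.range N, Real.Gamma ((j : ℝ) + 1)) / Real.Gamma ((N : ℝ) ^ 2)) ^
            (1 / ((N : ℝ) ^ 2 - 1)))
      atTop (nhds ((4 * Real.pi ^ 2 * Real.exp 1) ^ ((1 : ℝ) / 4))) := by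
  have htarget : (4 * Real.pi ^ 2 * Real.exp 1) ^ ((1 : ℝ) / 4)
      = Real.exp ((1/2) * Real.log (2*Real.pi) + 1/4) := by
    rw [Real.rpow_def_of_pos (by positivity)]
    congr 1
    have h4 : Real.log 4 = 2 * Real.log 2 := by
      rw [show (4:ℝ) = 2^2 by norm_num, Real.log_pow]; push_cast; ring
    rw [Real.log_mul (by positivity) (Real.exp_pos 1).ne',
      Real.log_mul (by positivity) (by positivity), Real.log_exp, Real.log_pow, h4,
      Real.log_mul (by norm_num) Real.pi_pos.ne']
    push_cast
    ring
  rw [htarget]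
  have hexp := (Real.continuous_exp.tendsto _).comp lim_LL
  apply hexp.congr'
  filter_upwards [eventually_ge_atTop 2] with N hN
  have hN2 : (2:ℝ) ≤ (N:ℝ) := by exact_mod_cast hN
  have hM : (0:ℝ) < (N:ℝ)^2 - 1 := by nlinarith
  have hN0 : (0:ℝ) < (N:ℝ) := by linarith
  -- rewrite Gamma factors
  have hgam : ∀ j : ℕ, Real.Gamma ((j:ℝ) + 1) = (j ! : ℝ) := fun j => Real.Gamma_nat_eq_factorial j
  have h1 : 1 ≤ N^2 := Nat.one_le_pow _ _ (by omega)
  have hMcast : ((N^2 - 1 : ℕ) : ℝ) = (N:ℝ)^2 - 1 := by push_cast [h1]; ring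
  have hΓ : Real.Gamma ((N:ℝ)^2) = ((N^2-1)! : ℝ) := by
    rw [show ((N:ℝ)^2) = ((N^2-1 : ℕ):ℝ) + 1 by rw [hMcast]; ring]
    exact Real.Gamma_nat_eq_factorial _
  have hP : (∏ j ∈ Finset.range N, Real.Gamma ((j : ℝ) + 1))
      = ∏ j ∈ Finset.range N, (j ! : ℝ) := Finset.prod_congr rfl (fun j _ => hgam j)
  have hPpos : (0:ℝ) < ∏ j ∈ Finset.range N, (j ! : ℝ) :=
    Finset.prod_pos (fun j _ => by positivity)
  have hlogP : Real.log (∏ j ∈ Finset.range N, (j ! : ℝ))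
      = ∑ j ∈ Finset.range N, Real.log (j !) :=
    Real.log_prod (fun j _ => by positivity)
  have hrpos : (0:ℝ) < (2 * Real.pi) ^ ((N : ℝ) * ((N : ℝ) - 1) / 2) :=
    Real.rpow_pos_of_pos (by positivity) _
  have hsq : (0:ℝ) < Real.sqrt N := Real.sqrt_pos.2 hN0
  have hV : (0:ℝ) < (2 * Real.pi) ^ ((N : ℝ) * ((N : ℝ) - 1) / 2) * Real.sqrt N *
      (∏ j ∈ Finset.range N, Real.Gamma ((j : ℝ) + 1)) / Real.Gamma ((N : ℝ) ^ 2) := by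
    rw [hP, hΓ]
    positivity
  have hlogV : Real.log ((2 * Real.pi) ^ ((N : ℝ) * ((N : ℝ) - 1) / 2) * Real.sqrt N *
      (∏ j ∈ Finset.range N, Real.Gamma ((j : ℝ) + 1)) / Real.Gamma ((N : ℝ) ^ 2))
      = (N:ℝ) * ((N:ℝ)-1)/2 * Real.log (2*Real.pi) + (1/2) * Real.log N
        + (∑ j ∈ Finset.range N, Real.log (j !)) - Real.log ((N^2-1)!) := by
    rw [hP, hΓ, Real.log_div (by positivity) (by positivity),
      Real.log_mul (by positivity) hPpos.ne', Real.log_mul hrpos.ne' hsq.ne',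
      Real.log_rpow (by positivity), Real.log_sqrt hN0.le, hlogP]
    ring
  show Real.exp (LL N) = _
  rw [Real.rpow_def_of_pos hM, Real.rpow_def_of_pos hV, ← Real.exp_add, hlogV,
    Real.exp_eq_exp, LL, tt]
  field_simp
  ring
end
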